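/- Let r ∈ (0,1/2). For every measurable function F : ℝ³ → [0,∞], one has ∫_{A_r} F(x₁,x₂,x₃) dx₁ dx₂ dx₃ = ∫_{Ω_r} ∫_{r/u}^{1} F(ut, vt, t) · t² dt du dv, as an identity in [0,∞]. -/

import Mathlib

open MeasureTheory Set

/-- The region `A_r` of ordered triangle-admissible triples. -/
def regionA (r : ℝ) : Set (ℝ × ℝ × ℝ) :=
  {p | r ≤ p.1 ∧ p.1 < p.2.1 ∧ p.2.1 < p.2.2 ∧ p.2.2 ≤ 1 ∧
    p.2.1 - p.1 ≤ p.2.2 ∧ p.2.2 ≤ p.1 + p.2.1}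

/-- The shape domain `Ω_r`. -/
def regionOmega (r : ℝ) : Set (ℝ × ℝ) :=
  {p | r < p.1 ∧ p.1 < 1 / 2 ∧ 1 - p.1 < p.2 ∧ p.2 < 1} ∪
  {p | 1 / 2 < p.1 ∧ p.1 < 1 ∧ p.1 < p.2 ∧ p.2 < 1}

namespace Stmt3Aux

instance : MeasureTheory.Measure.IsAddHaarMeasure (volume : Measure (ℝ × ℝ)) := by
  rw [MeasureTheory.Measure.volume_eq_prod]; infer_instance

instance : MeasureTheory.Measure.IsAddHaarMeasure (volume : Measure (ℝ × ℝ × ℝ)) := by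
  rw [MeasureTheory.Measure.volume_eq_prod]; infer_instance

noncomputable section

/-- the change of variables map -/
def phi : ℝ × ℝ × ℝ → ℝ × ℝ × ℝ := fun p => (p.1 * p.2.2, p.2.1 * p.2.2, p.2.2)

/-- the parameter domain -/
def S (r : ℝ) : Set (ℝ × ℝ × ℝ) :=
  {p | (p.1, p.2.1) ∈ regionOmega r ∧ r / p.1 < p.2.2 ∧ p.2.2 < 1}

def U : ℝ × ℝ × ℝ →L[ℝ] ℝ := ContinuousLinearMap.fst ℝ ℝ (ℝ × ℝ)
def V : ℝ × ℝ × ℝ →L[ℝ] ℝ :=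
  (ContinuousLinearMap.fst ℝ ℝ ℝ).comp (ContinuousLinearMap.snd ℝ ℝ (ℝ × ℝ))
def T : ℝ × ℝ × ℝ →L[ℝ] ℝ :=
  (ContinuousLinearMap.snd ℝ ℝ ℝ).comp (ContinuousLinearMap.snd ℝ ℝ (ℝ × ℝ))

/-- the derivative of `phi` -/
def L (p : ℝ × ℝ × ℝ) : ℝ × ℝ × ℝ →L[ℝ] ℝ × ℝ × ℝ :=
  (p.1 • T + p.2.2 • U).prod ((p.2.1 • T + p.2.2 • V).prod T)

lemma hasFDerivAt_phi (p : ℝ × ℝ × ℝ) : HasFDerivAt phi (L p) p := by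
  have hU : HasFDerivAt (fun q : ℝ × ℝ × ℝ => q.1) U p := hasFDerivAt_fst
  have hV : HasFDerivAt (fun q : ℝ × ℝ × ℝ => q.2.1) V p :=
    (hasFDerivAt_fst (E := ℝ) (F := ℝ)).comp p hasFDerivAt_snd
  have hT : HasFDerivAt (fun q : ℝ × ℝ × ℝ => q.2.2) T p :=
    (hasFDerivAt_snd (E := ℝ) (F := ℝ)).comp p hasFDerivAt_snd
  exact HasFDerivAt.prodMk (hU.mul hT) (HasFDerivAt.prodMk (hV.mul hT) hT)

/-- the standard linear equivalence -/
def e : (Fin 3 → ℝ) ≃ₗ[ℝ] ℝ × ℝ × ℝ where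
  toFun v := (v 0, v 1, v 2)
  invFun p := ![p.1, p.2.1, p.2.2]
  map_add' v w := by simp [Prod.ext_iff]
  map_smul' c v := by simp [Prod.ext_iff]
  left_inv v := by funext i; fin_cases i <;> simp
  right_inv p := by simp

lemma det_L (p : ℝ × ℝ × ℝ) : (L p).det = p.2.2 ^ 2 := by
  have key : (L p : ℝ × ℝ × ℝ →ₗ[ℝ] ℝ × ℝ × ℝ) =
      (e : (Fin 3 → ℝ) →ₗ[ℝ] ℝ × ℝ × ℝ) ∘ₗ
        (Matrix.toLin' !![p.2.2, 0, p.1; 0, p.2.2, p.2.1; 0, 0, 1]) ∘ₗ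
        (e.symm : ℝ × ℝ × ℝ →ₗ[ℝ] Fin 3 → ℝ) := by
    apply LinearMap.ext
    intro x
    simp [L, U, V, T, e, Matrix.toLin'_apply, Matrix.mulVec, dotProduct,
      Fin.sum_univ_three, LinearEquiv.coe_mk, Prod.ext_iff]
    ring_nf
    constructor <;> trivial
  have : (L p).det = LinearMap.det ((e : (Fin 3 → ℝ) →ₗ[ℝ] ℝ × ℝ × ℝ) ∘ₗ
      (Matrix.toLin' !![p.2.2, 0, p.1; 0, p.2.2, p.2.1; 0, 0, 1]) ∘ₗ
      (e.symm : ℝ × ℝ × ℝ →ₗ[ℝ] Fin 3 → ℝ)) := by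
    rw [ContinuousLinearMap.det, key]
  rw [this, LinearMap.det_conj, LinearMap.det_toLin', Matrix.det_fin_three]
  simp [Matrix.vecHead, Matrix.vecTail]
  ring

/-- a level set of a nonzero linear functional is null -/
lemma null_level (l : (ℝ × ℝ × ℝ) →ₗ[ℝ] ℝ) (y : ℝ × ℝ × ℝ) (hy : l y ≠ 0) (c : ℝ) :
    volume {x : ℝ × ℝ × ℝ | l x = c} = 0 := by
  rcases eq_empty_or_nonempty {x : ℝ × ℝ × ℝ | l x = c} with h | ⟨x₀, hx₀⟩
  · simp [h]
  · have hker : LinearMap.ker l ≠ ⊤ := by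
      intro h
      exact hy (by simpa using LinearMap.mem_ker.1 (h ▸ Submodule.mem_top : y ∈ LinearMap.ker l))
    have hset : {x : ℝ × ℝ × ℝ | l x = c} = (fun z => -x₀ + z) ⁻¹' (LinearMap.ker l : Set (ℝ × ℝ × ℝ)) := by
      ext z
      have hc0 : l x₀ = c := hx₀
      simp only [mem_setOf_eq, mem_preimage, SetLike.mem_coe, LinearMap.mem_ker, map_add,
        map_neg, hc0]
      constructor <;> intro h <;> linarith
    rw [hset, measure_preimage_add]
    exact Measure.addHaar_submodule volume (LinearMap.ker l) hker

lemma S_measurable (r : ℝ) : MeasurableSet (S r) := by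
  have hΩ : MeasurableSet (regionOmega r) := by
    unfold regionOmega
    apply MeasurableSet.union <;>
    · apply MeasurableSet.inter
      · exact measurableSet_lt measurable_const measurable_fst
      · apply MeasurableSet.inter
        · exact measurableSet_lt measurable_fst measurable_const
        · exact (measurableSet_lt (by measurability) measurable_snd).inter
            (measurableSet_lt measurable_snd measurable_const)
  have h1 : MeasurableSet {p : ℝ × ℝ × ℝ | (p.1, p.2.1) ∈ regionOmega r} :=
    (measurable_fst.prodMk (measurable_fst.comp measurable_snd)) hΩ
  have h2 : MeasurableSet {p : ℝ × ℝ × ℝ | r / p.1 < p.2.2} :=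
    measurableSet_lt (measurable_const.div measurable_fst)
      (measurable_snd.comp measurable_snd)
  have h3 : MeasurableSet {p : ℝ × ℝ × ℝ | p.2.2 < 1} :=
    measurableSet_lt (measurable_snd.comp measurable_snd) measurable_const
  exact (h1.inter (h2.inter h3))

lemma omega_facts {r : ℝ} (hr : r ∈ Set.Ioo (0 : ℝ) (1 / 2)) {q : ℝ × ℝ}
    (hq : q ∈ regionOmega r) :
    r < q.1 ∧ q.1 < q.2 ∧ q.2 < 1 ∧ 1 < q.1 + q.2 ∧ q.2 - q.1 < 1 := by
  obtain ⟨hr0, hr2⟩ := hr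
  rcases hq with ⟨h1, h2, h3, h4⟩ | ⟨h1, h2, h3, h4⟩
  · exact ⟨h1, by linarith, h4, by linarith, by linarith⟩
  · exact ⟨by linarith, h3, h4, by linarith, by linarith⟩

lemma mem_S_pos {r : ℝ} (hr : r ∈ Set.Ioo (0 : ℝ) (1 / 2)) {p : ℝ × ℝ × ℝ}
    (hp : p ∈ S r) : 0 < p.1 ∧ 0 < p.2.2 := by
  obtain ⟨hΩ, ht1, ht2⟩ := hp
  obtain ⟨h1, _, _, _, _⟩ := omega_facts hr hΩ
  have h0 : 0 < p.1 := lt_trans hr.1 h1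
  refine ⟨h0, lt_trans (div_pos hr.1 h0) ht1⟩

lemma injOn_phi {r : ℝ} (hr : r ∈ Set.Ioo (0 : ℝ) (1 / 2)) : Set.InjOn phi (S r) := by
  intro p hp q hq h
  obtain ⟨-, hpt⟩ := mem_S_pos hr hp
  have h3 : p.2.2 = q.2.2 := congrArg (fun x => x.2.2) h
  have h1 : p.1 * p.2.2 = q.1 * q.2.2 := congrArg (fun x => x.1) h
  have h2 : p.2.1 * p.2.2 = q.2.1 * q.2.2 := congrArg (fun x => x.2.1) h
  have ht : p.2.2 ≠ 0 := ne_of_gt hpt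
  rw [← h3] at h1 h2
  have e1 : p.1 = q.1 := mul_right_cancel₀ ht h1
  have e2 : p.2.1 = q.2.1 := mul_right_cancel₀ ht h2
  exact Prod.ext e1 (Prod.ext e2 h3)

lemma image_subset_A {r : ℝ} (hr : r ∈ Set.Ioo (0 : ℝ) (1 / 2)) :
    phi '' S r ⊆ regionA r := by
  rintro x ⟨⟨u, v, t⟩, hp, rfl⟩
  obtain ⟨hΩ, ht1, ht2⟩ := hp
  obtain ⟨h1, h2, h3, h4, h5⟩ := omega_facts hr hΩ
  obtain ⟨hu0, ht0⟩ := mem_S_pos hr ⟨hΩ, ht1, ht2⟩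
  simp only at h1 h2 h3 h4 h5 hu0 ht0 ht1 ht2
  have hru : r < u * t := by
    have := (div_lt_iff₀ hu0).1 ht1
    nlinarith
  refine ⟨le_of_lt hru, ?_, ?_, le_of_lt ht2, ?_, ?_⟩
  · exact mul_lt_mul_of_pos_right h2 ht0
  · simpa [phi] using by nlinarith
  · simp only [phi]; nlinarith
  · simp only [phi]; nlinarith

lemma mem_image_of_strict {r : ℝ} (hr : r ∈ Set.Ioo (0 : ℝ) (1 / 2)) {x : ℝ × ℝ × ℝ}
    (hx : x ∈ regionA r) (h1 : r < x.1) (h2 : x.2.2 < 1) (h3 : x.2.2 < x.1 + x.2.1)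
    (h4 : 2 * x.1 ≠ x.2.2) : x ∈ phi '' S r := by
  obtain ⟨-, hb, hc, -, -, -⟩ := hx
  have ht0 : 0 < x.2.2 := by linarith [hr.1]
  have hx1 : 0 < x.1 := by linarith [hr.1]
  refine ⟨(x.1 / x.2.2, x.2.1 / x.2.2, x.2.2), ⟨?_, ?_, h2⟩, ?_⟩
  · -- (u, v) ∈ regionOmega r
    have hu : r < x.1 / x.2.2 := by
      rw [lt_div_iff₀ ht0]; nlinarith [hr.1]
    have hv1 : x.2.1 / x.2.2 < 1 := by rw [div_lt_one ht0]; linarith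
    have hsum : 1 - x.1 / x.2.2 < x.2.1 / x.2.2 := by
      rw [sub_lt_iff_lt_add, ← add_div, lt_div_iff₀ ht0]
      linarith
    rcases lt_trichotomy (x.1 / x.2.2) (1 / 2) with h | h | h
    · exact Or.inl ⟨hu, h, hsum, hv1⟩
    · exfalso
      apply h4
      rw [div_eq_div_iff ht0.ne' (by norm_num : (2:ℝ) ≠ 0)] at h
      linarith
    · refine Or.inr ⟨h, ?_, ?_, hv1⟩
      · rw [div_lt_one ht0]; linarith
      · exact (div_lt_div_iff_of_pos_right ht0).2 hb
  · -- r / u < t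
    show r / (x.1 / x.2.2) < x.2.2
    rw [div_div_eq_mul_div, div_lt_iff₀ hx1]
    nlinarith
  · -- phi p = x
    show (x.1 / x.2.2 * x.2.2, x.2.1 / x.2.2 * x.2.2, x.2.2) = x
    rw [div_mul_cancel₀ _ ht0.ne', div_mul_cancel₀ _ ht0.ne']

/-- the bad (null) boundary set -/
def badN (r : ℝ) : Set (ℝ × ℝ × ℝ) :=
  {x | x.1 = r} ∪ {x | x.2.2 = 1} ∪ {x | x.2.2 = x.1 + x.2.1} ∪ {x | 2 * x.1 = x.2.2}

lemma badN_null (r : ℝ) : volume (badN r) = 0 := by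
  have lf : (ℝ × ℝ × ℝ) →ₗ[ℝ] ℝ := LinearMap.fst ℝ ℝ (ℝ × ℝ)
  unfold badN
  refine measure_union_null (measure_union_null (measure_union_null ?_ ?_) ?_) ?_
  · exact null_level (LinearMap.fst ℝ ℝ (ℝ × ℝ)) (1, 0, 0) (by norm_num) r
  · exact null_level ((LinearMap.snd ℝ ℝ ℝ).comp (LinearMap.snd ℝ ℝ (ℝ × ℝ)))
      (0, 0, 1) (by norm_num) 1
  · have := null_level
      ((LinearMap.snd ℝ ℝ ℝ).comp (LinearMap.snd ℝ ℝ (ℝ × ℝ))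
        - LinearMap.fst ℝ ℝ (ℝ × ℝ)
        - (LinearMap.fst ℝ ℝ ℝ).comp (LinearMap.snd ℝ ℝ (ℝ × ℝ)))
      (1, 0, 0) (by norm_num) 0
    convert this using 2
    ext x
    simp only [mem_setOf_eq, LinearMap.sub_apply, LinearMap.comp_apply, LinearMap.snd_apply,
      LinearMap.fst_apply]
    constructor <;> intro h <;> linarith
  · have := null_level
      ((2 : ℝ) • LinearMap.fst ℝ ℝ (ℝ × ℝ)
        - (LinearMap.snd ℝ ℝ ℝ).comp (LinearMap.snd ℝ ℝ (ℝ × ℝ)))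
      (1, 0, 0) (by norm_num) 0
    convert this using 2
    ext x
    simp only [mem_setOf_eq, LinearMap.sub_apply, LinearMap.comp_apply, LinearMap.snd_apply,
      LinearMap.smul_apply, LinearMap.fst_apply, smul_eq_mul]
    constructor <;> intro h <;> linarith

lemma regionA_ae_eq {r : ℝ} (hr : r ∈ Set.Ioo (0 : ℝ) (1 / 2)) :
    regionA r =ᵐ[volume] phi '' S r := by
  rw [MeasureTheory.ae_eq_set]
  constructor
  · refine measure_mono_null ?_ (badN_null r)
    rintro x ⟨hxA, hxn⟩
    by_contra hN
    simp only [badN, mem_union, mem_setOf_eq, not_or] at hN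
    obtain ⟨⟨⟨n1, n2⟩, n3⟩, n4⟩ := hN
    obtain ⟨ha, hb, hc, hd, he, hf⟩ := hxA
    exact hxn (mem_image_of_strict hr ⟨ha, hb, hc, hd, he, hf⟩
      (lt_of_le_of_ne ha (Ne.symm n1)) (lt_of_le_of_ne hd n2)
      (lt_of_le_of_ne hf n3) n4)
  · rw [diff_eq_empty.2 (image_subset_A hr)]
    simp

/-- the transported parameter domain -/
def Tset (r : ℝ) : Set ((ℝ × ℝ) × ℝ) :=
  {q | q.1 ∈ regionOmega r ∧ q.2 ∈ Ioo (r / q.1.1) 1}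

lemma Omega_measurable (r : ℝ) : MeasurableSet (regionOmega r) := by
  unfold regionOmega
  apply MeasurableSet.union <;>
  · apply MeasurableSet.inter
    · exact measurableSet_lt measurable_const measurable_fst
    · apply MeasurableSet.inter
      · exact measurableSet_lt measurable_fst measurable_const
      · exact (measurableSet_lt (by measurability) measurable_snd).inter
          (measurableSet_lt measurable_snd measurable_const)

lemma Tset_measurable (r : ℝ) : MeasurableSet (Tset r) := by
  apply MeasurableSet.inter
  · exact measurable_fst (Omega_measurable r)
  · apply MeasurableSet.inter
    · exact measurableSet_lt ((measurable_const.div (measurable_fst.comp measurable_fst)))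
        measurable_snd
    · exact measurableSet_lt measurable_snd measurable_const

lemma tonelli_step {r : ℝ} (F : ℝ × ℝ × ℝ → ENNReal) (hF : Measurable F) :
    ∫⁻ p in S r, ENNReal.ofReal (p.2.2 ^ 2) * F (phi p) =
    ∫⁻ p in regionOmega r,
      ∫⁻ t in Set.Ioo (r / p.1) 1, F (p.1 * t, p.2 * t, t) * ENNReal.ofReal (t ^ 2) := by
  set g : (ℝ × ℝ) × ℝ → ENNReal :=
    fun q => F (q.1.1 * q.2, q.1.2 * q.2, q.2) * ENNReal.ofReal (q.2 ^ 2) with hg_def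
  have hmap : Measurable (fun q : (ℝ × ℝ) × ℝ => (q.1.1 * q.2, q.1.2 * q.2, q.2)) :=
    ((measurable_fst.fst.mul measurable_snd).prodMk
      ((measurable_fst.snd.mul measurable_snd).prodMk measurable_snd))
  have hg : Measurable g :=
    (hF.comp hmap).mul (ENNReal.measurable_ofReal.comp (measurable_snd.pow_const 2))
  -- transport along prodAssoc
  have hψ := (MeasureTheory.volume_preserving_prodAssoc (α₁ := ℝ) (β₁ := ℝ) (γ₁ := ℝ))
  have hpre : (MeasurableEquiv.prodAssoc : ((ℝ × ℝ) × ℝ) ≃ᵐ ℝ × ℝ × ℝ) ⁻¹' (S r) = Tset r := by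
    ext ⟨⟨u, v⟩, t⟩
    simp only [mem_preimage, MeasurableEquiv.prodAssoc, MeasurableEquiv.coe_mk,
      Equiv.prodAssoc_apply, S, Tset, mem_setOf_eq, Set.mem_Ioo]
  have step1 : ∫⁻ p in S r, ENNReal.ofReal (p.2.2 ^ 2) * F (phi p) =
      ∫⁻ q in Tset r, g q := by
    rw [← hψ.setLIntegral_comp_preimage_emb (MeasurableEquiv.measurableEmbedding _)
      (fun p => ENNReal.ofReal (p.2.2 ^ 2) * F (phi p)) (S r), hpre]
    refine lintegral_congr fun q => ?_
    simp only [MeasurableEquiv.prodAssoc, MeasurableEquiv.coe_mk, Equiv.prodAssoc_apply,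
      phi, hg_def]
    exact mul_comm _ _
  have step2 : ∫⁻ q in Tset r, g q =
      ∫⁻ p in regionOmega r, ∫⁻ t in Set.Ioo (r / p.1) 1, g (p, t) := by
    rw [← lintegral_indicator (Tset_measurable r),
      ← lintegral_indicator (Omega_measurable r),
      MeasureTheory.Measure.volume_eq_prod,
      lintegral_prod _ ((hg.indicator (Tset_measurable r)).aemeasurable)]
    refine lintegral_congr fun p => ?_
    by_cases hp : p ∈ regionOmega r
    · rw [indicator_of_mem hp, ← lintegral_indicator measurableSet_Ioo]
      refine lintegral_congr fun t => ?_
      by_cases ht : t ∈ Ioo (r / p.1) 1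
      · rw [indicator_of_mem ht, indicator_of_mem (show (p, t) ∈ Tset r from ⟨hp, ht⟩)]
      · rw [indicator_of_notMem ht,
          indicator_of_notMem (show (p, t) ∉ Tset r from fun h => ht h.2)]
    · rw [indicator_of_notMem hp]
      calc ∫⁻ t, (Tset r).indicator g (p, t)
          = ∫⁻ _t : ℝ, (0 : ENNReal) := by
            refine lintegral_congr fun t => ?_
            exact indicator_of_notMem (fun h => hp h.1) g
      _ = 0 := lintegral_zero
  rw [step1, step2]

end

end Stmt3Aux

theorem stmt_3 (r : ℝ) (hr : r ∈ Set.Ioo (0 : ℝ) (1 / 2))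
    (F : ℝ × ℝ × ℝ → ENNReal) (hF : Measurable F) :
    ∫⁻ x in regionA r, F x =
    ∫⁻ p in regionOmega r,
      ∫⁻ t in Set.Ioo (r / p.1) 1, F (p.1 * t, p.2 * t, t) * ENNReal.ofReal (t ^ 2) := by
  open Stmt3Aux in
  have h1 : ∫⁻ x in regionA r, F x = ∫⁻ x in phi '' S r, F x :=
    setLIntegral_congr (regionA_ae_eq hr)
  rw [h1, lintegral_image_eq_lintegral_abs_det_fderiv_mul volume (S_measurable r)
    (fun x _ => (hasFDerivAt_phi x).hasFDerivWithinAt) (injOn_phi hr) F]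
  have h2 : ∫⁻ p in S r, ENNReal.ofReal |(L p).det| * F (phi p) =
      ∫⁻ p in S r, ENNReal.ofReal (p.2.2 ^ 2) * F (phi p) :=
    lintegral_congr fun p => by rw [det_L, abs_of_nonneg (sq_nonneg _)]
  rw [h2, tonelli_step F hF]
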